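/- Let M be a nonzero comultiplication R-module with more than one minimal submodule, and let Λ be a nonempty finite proper subset of the set of minimal submodules of M. Then the sum of the minimal submodules in Λ is not a large submodule of M. -/
import Mathlib


/-- `M` is a comultiplication `R`-module: every submodule is of the form `(0 :_M I)`. -/
def IsComultiplication (R M : Type*) [CommRing R] [AddCommGroup M] [Module R M] : Prop :=
  ∀ N : Submodule R M, ∃ I : Ideal R, ∀ m : M, m ∈ N ↔ ∀ r ∈ I, r • m = 0

/-- A submodule is large (essential) if it meets every nonzero submodule nontrivially. -/
def IsLarge {R M : Type*} [CommRing R] [AddCommGroup M] [Module R M]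
    (N : Submodule R M) : Prop :=
  ∀ L : Submodule R M, L ≠ ⊥ → N ⊓ L ≠ ⊥

/-- In a comultiplication module, if an element is killed by the annihilator of `N`,
then it belongs to `N`. -/
lemma mem_of_annihilator_smul_eq_zero {R M : Type*} [CommRing R] [AddCommGroup M] [Module R M]
    (hc : IsComultiplication R M) (N : Submodule R M) (m : M)
    (h : ∀ r ∈ N.annihilator, r • m = 0) : m ∈ N := by
  obtain ⟨I, hI⟩ := hc N
  refine (hI m).2 fun r hr => h r ?_
  exact Submodule.mem_annihilator.2 fun n hn => (hI n).1 hn r hr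

/-- The annihilator of an atom (minimal submodule) is prime. -/
lemma annihilator_isPrime_of_isAtom {R M : Type*} [CommRing R] [AddCommGroup M] [Module R M]
    {S : Submodule R M} (hS : IsAtom S) : S.annihilator.IsPrime := by
  constructor
  · intro htop
    obtain ⟨m, hm, hm0⟩ := Submodule.exists_mem_ne_zero_of_ne_bot hS.1
    have h1 : (1 : R) ∈ S.annihilator := htop ▸ Submodule.mem_top
    have := Submodule.mem_annihilator.1 h1 m hm
    simp at this
    exact hm0 this
  · intro r s hrs
    by_contra hcon
    push_neg at hcon
    obtain ⟨hr, hs⟩ := hcon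
    set T : Submodule R M := Ideal.span {r} • S with hT
    have hTle : T ≤ S := Submodule.smul_le.2 fun c _ x hx => S.smul_mem c hx
    have hTne : T ≠ ⊥ := by
      intro hbot
      apply hr
      refine Submodule.mem_annihilator.2 fun n hn => ?_
      have : r • n ∈ T := Submodule.smul_mem_smul (Ideal.mem_span_singleton_self r) hn
      rw [hbot] at this
      simpa using this
    have hTS : T = S := ((hS.le_iff).1 hTle).resolve_left hTne
    apply hs
    refine Submodule.mem_annihilator.2 fun n hn => ?_
    rw [← hTS] at hn
    refine Submodule.smul_induction_on hn ?_ ?_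
    · intro c hcmem x hx
      obtain ⟨t, ht⟩ := Ideal.mem_span_singleton'.1 hcmem
      have hx0 : (r * s) • x = 0 := Submodule.mem_annihilator.1 hrs x hx
      rw [← ht, smul_smul, mul_comm, mul_assoc, mul_smul, hx0, smul_zero]
    · intro x y hx hy
      rw [smul_add, hx, hy, add_zero]

/-- If a nonzero comultiplication module has more than one minimal submodule and `Λ` is a
nonempty finite proper subset of the minimal submodules, then the sum of the members of `Λ`
is not large. -/
theorem stmt3 {R M : Type*} [CommRing R] [AddCommGroup M] [Module R M]
    [Nontrivial M] (hc : IsComultiplication R M)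
    (S₁ S₂ : Submodule R M) (hS₁ : IsAtom S₁) (hS₂ : IsAtom S₂) (hne : S₁ ≠ S₂)
    (Λ : Finset (Submodule R M)) (hΛne : Λ.Nonempty)
    (hΛ : (↑Λ : Set (Submodule R M)) ⊂ {S : Submodule R M | IsAtom S}) :
    ¬ IsLarge (Λ.sup id) := by
  intro hlarge
  -- pick an atom `S` not in `Λ`
  obtain ⟨S, hSatom, hSnot⟩ := Set.exists_of_ssubset hΛ
  simp only [Set.mem_setOf_eq] at hSatom
  have hSnot' : S ∉ Λ := fun h => hSnot (by exact_mod_cast h)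
  -- the key claim: Λ.sup id ⊓ S = ⊥
  have hkey : Λ.sup id ⊓ S = ⊥ := by
    by_contra hne0
    -- then, since S is an atom, S ≤ Λ.sup id
    have hinf_le : Λ.sup id ⊓ S ≤ S := inf_le_right
    have hinfS : Λ.sup id ⊓ S = S := ((hSatom.le_iff).1 hinf_le).resolve_left hne0
    have hSle : S ≤ Λ.sup id := by
      rw [← hinfS]; exact inf_le_left
    -- the intersection of the annihilators of members of Λ lies in Ann S
    have hinf_ann : Λ.inf (fun T => T.annihilator) ≤ S.annihilator := by
      intro r hr
      refine Submodule.mem_annihilator.2 fun n hn => ?_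
      have hn' : n ∈ Λ.sup id := hSle hn
      -- sup ≤ kernel of scalar multiplication by r
      have hker : Λ.sup id ≤ LinearMap.ker (r • (LinearMap.id : M →ₗ[R] M)) := by
        refine Finset.sup_le fun T hT => ?_
        intro x hx
        have hrT : r ∈ T.annihilator := by
          have := Finset.inf_le hT (f := fun T => T.annihilator)
          exact this hr
        simpa using Submodule.mem_annihilator.1 hrT x hx
      simpa using hker hn'
    -- the product of the annihilators lies in Ann S, which is prime
    have hprime := annihilator_isPrime_of_isAtom hSatom
    have hprod : (Λ.prod fun T => T.annihilator) ≤ S.annihilator :=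
      le_trans (Ideal.prod_le_inf) hinf_ann
    obtain ⟨T, hTΛ, hTann⟩ := (Ideal.IsPrime.prod_le hprime).1 hprod
    -- hence S ≤ T
    have hSleT : S ≤ T := by
      intro m hm
      refine mem_of_annihilator_smul_eq_zero hc T m fun r hr => ?_
      exact Submodule.mem_annihilator.1 (hTann hr) m hm
    have hTatom : IsAtom T := hΛ.1 hTΛ
    have : S = T := ((hTatom.le_iff).1 hSleT).resolve_left hSatom.1
    exact hSnot' (this ▸ hTΛ)
  exact hlarge S hSatom.1 hkey
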